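/- If a word x over {0,1} (finite or infinite) is not balanced, then there exists a word w such that both 0w0 and 1w1 are factors of x. -/

import Mathlib

/-- A word over `{0,1}`, either finite or infinite. -/
def Word01 := List Bool ⊕ (ℕ → Bool)

/-- `v` is a factor (contiguous subword) of the word `x`. -/
def IsFactor (v : List Bool) : Word01 → Prop
  | Sum.inl l => v <:+: l
  | Sum.inr s => ∃ m : ℕ, ∀ i : ℕ, i < v.length → v[i]? = some (s (m + i))

/-- A word is balanced if any two factors of the same length have numbers of
`1`'s differing by at most one. -/
def IsBalancedWord (x : Word01) : Prop :=
  ∀ u v : List Bool, IsFactor u x → IsFactor v x → u.length = v.length →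
    |(u.count true : ℤ) - (v.count true : ℤ)| ≤ 1

lemma factor_trans {x : Word01} {u v : List Bool} (h : IsFactor u x) (hv : v <:+: u) :
    IsFactor v x := by
  cases x with
  | inl l => exact hv.trans h
  | inr s =>
    obtain ⟨m, hm⟩ := h
    obtain ⟨a, b, rfl⟩ := hv
    refine ⟨m + a.length, fun i hi => ?_⟩
    have h1 : ((a ++ v) ++ b)[a.length + i]? = some (s (m + (a.length + i))) := by
      apply hm
      simp only [List.length_append]
      omega
    rw [List.getElem?_append_left (by simp; omega), List.getElem?_append_right (by omega)] at h1
    simp only [Nat.add_sub_cancel_left] at h1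
    rw [h1]
    ring_nf

lemma mismatch {s t : List Bool} (hl : s.length = t.length) (hne : s ≠ t) :
    ∃ p c d s' t', s = p ++ c :: s' ∧ t = p ++ d :: t' ∧ c ≠ d ∧ s'.length = t'.length := by
  induction s generalizing t with
  | nil =>
    cases t with
    | nil => exact absurd rfl hne
    | cons b t => simp at hl
  | cons a s ih =>
    cases t with
    | nil => simp at hl
    | cons b t =>
      by_cases hab : a = b
      · subst hab
        have hst : s ≠ t := fun h => hne (by rw [h])
        obtain ⟨p, c, d, s', t', h1, h2, h3, h4⟩ := ih (by simpa using hl) hst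
        exact ⟨a :: p, c, d, s', t', by rw [h1]; rfl, by rw [h2]; rfl, h3, h4⟩
      · exact ⟨[], a, b, s, t, rfl, rfl, hab, by simpa using hl⟩

def Bad (x : Word01) (n : ℕ) : Prop :=
  ∃ u v : List Bool, IsFactor u x ∧ IsFactor v x ∧ u.length = n ∧ v.length = n ∧
    v.count true + 2 ≤ u.count true

theorem not_balanced_exists_0w0_1w1 (x : Word01) (hx : ¬ IsBalancedWord x) :
    ∃ w : List Bool,
      IsFactor (false :: (w ++ [false])) x ∧ IsFactor (true :: (w ++ [true])) x := by
  classical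
  have hbad : ∃ n, Bad x n := by
    unfold IsBalancedWord at hx
    push_neg at hx
    obtain ⟨u, v, hu, hv, hlen, habs⟩ := hx
    rcases abs_cases ((u.count true : ℤ) - (v.count true : ℤ)) with ⟨he, _⟩ | ⟨he, _⟩ <;>
      rw [he] at habs
    · exact ⟨u.length, u, v, hu, hv, rfl, hlen.symm, by omega⟩
    · exact ⟨u.length, v, u, hv, hu, hlen.symm, rfl, by omega⟩
  set n := Nat.find hbad with hn
  obtain ⟨u, v, hu, hv, hul, hvl, hc⟩ := Nat.find_spec hbad
  have key : ∀ a b : List Bool, IsFactor a x → IsFactor b x → a.length = b.length →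
      a.length < n → a.count true ≤ b.count true + 1 := by
    intro a b ha hb hab hlt
    by_contra h
    exact Nat.find_min hbad hlt ⟨a, b, ha, hb, rfl, hab.symm, by omega⟩
  have hn2 : 2 ≤ n := by
    have h1 : u.count true ≤ u.length := List.count_le_length
    omega
  -- first letters
  rcases u with _ | ⟨a, u'⟩
  · simp at hul; omega
  rcases v with _ | ⟨b, v'⟩
  · simp at hvl; omega
  simp only [List.length_cons] at hul hvl
  have hu' : IsFactor u' x := factor_trans hu ⟨[a], [], by simp⟩
  have hv' : IsFactor v' x := factor_trans hv ⟨[b], [], by simp⟩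
  have e1 : u'.count true ≤ v'.count true + 1 :=
    key u' v' hu' hv' (by omega) (by omega)
  have hab : a = true ∧ b = false ∧ u'.count true = v'.count true + 1 := by
    cases a <;> cases b <;> simp [List.count_cons] at hc ⊢ <;> omega
  obtain ⟨rfl, rfl, hcnt⟩ := hab
  -- last letters
  rcases u'.eq_nil_or_concat with rfl | ⟨s, c, rfl⟩
  · simp at hul; omega
  rcases v'.eq_nil_or_concat with rfl | ⟨t, d, rfl⟩
  · simp at hvl; omega
  simp only [List.concat_eq_append] at *
  have hts : IsFactor (true :: s) x := factor_trans hu ⟨[], [c], by simp⟩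
  have hft : IsFactor (false :: t) x := factor_trans hv ⟨[], [d], by simp⟩
  have e2 : (true :: s).count true ≤ (false :: t).count true + 1 :=
    key _ _ hts hft (by simp at hul hvl ⊢; omega) (by simp at hul ⊢; omega)
  simp only [List.count_cons, List.count_append] at e2 hcnt
  have hcd : c = true ∧ d = false ∧ s.count true = t.count true := by
    cases c <;> cases d <;> simp_all <;> omega
  obtain ⟨rfl, rfl, hst⟩ := hcd
  have hlst : s.length = t.length := by simp at hul hvl; omega
  have hseq : s = t := by
    by_contra hne
    obtain ⟨p, c', d', s1, t1, rfl, rfl, hcd', hl1⟩ := mismatch hlst hne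
    cases c' <;> cases d'
    · exact hcd' rfl
    · -- c' = false, d' = true : suffix argument
      have h1 : IsFactor (s1 ++ [true]) x :=
        factor_trans hu ⟨true :: p ++ [false], [], by simp⟩
      have h2 : IsFactor (t1 ++ [false]) x :=
        factor_trans hv ⟨false :: p ++ [true], [], by simp⟩
      have h3 := key (s1 ++ [true]) (t1 ++ [false]) h1 h2 (by simp; omega)
        (by simp at hul ⊢; omega)
      simp [List.count_append, List.count_cons] at h3 hst
      omega
    · -- c' = true, d' = false : prefix argument
      have h1 : IsFactor (true :: (p ++ [true])) x :=
        factor_trans hu ⟨[], s1 ++ [true], by simp⟩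
      have h2 : IsFactor (false :: (p ++ [false])) x :=
        factor_trans hv ⟨[], t1 ++ [false], by simp⟩
      have h3 := key (true :: (p ++ [true])) (false :: (p ++ [false])) h1 h2 (by simp)
        (by simp at hul ⊢; omega)
      simp [List.count_append, List.count_cons] at h3
    · exact hcd' rfl
  exact ⟨s, hseq ▸ hv, hu⟩
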